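/- Let Γ be a finite connected pointed graph of first Betti number n whose degree (sum over non-basepoint vertices of valence minus 2) satisfies deg(Γ) < n - 1. Then the complement Γ \ {*} of the basepoint is disconnected or empty. -/

import Mathlib

/-- Let `Γ` be a finite connected pointed multigraph of first Betti
number `n` (`#edges - #vertices + 1 = n`) with basepoint `base`, all
non-basepoint vertices of valence at least `3`, whose degree
`Σ_{v ≠ base} (valence v - 2)` satisfies `deg Γ < n - 1`.  Then the complement
`Γ \ {base}` of the basepoint is disconnected or empty.  The complement is
modeled by its pieces: the non-basepoint vertices together with the open
interiors of all edges (a vertex piece touches an edge piece iff it is an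
endpoint of that edge); `Γ \ {base}` is empty when there are no pieces, and
disconnected when two pieces cannot be joined by a chain of touching pieces. -/
theorem complement_of_basepoint_disconnected_of_small_degree
    (V Et : Type*) [Fintype V] [DecidableEq V] [Fintype Et]
    (ends : Et → Multiset V) (hends : ∀ e, Multiset.card (ends e) = 2)
    (base : V)
    (hconn : ∀ u v : V, Relation.ReflTransGen
      (fun a b => ∃ e, a ∈ ends e ∧ b ∈ ends e) u v)
    (n : ℕ)
    (hn : Fintype.card Et + 1 = Fintype.card V + n)
    (hval : ∀ v : V, v ≠ base → 3 ≤ (∑ e : Et, (ends e).count v))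
    (deg : ℕ)
    (hdeg : deg = ∑ v ∈ Finset.univ.filter (fun v : V => v ≠ base),
      ((∑ e : Et, (ends e).count v) - 2))
    (hsmall : deg + 1 < n)
    -- pieces of the complement Γ \ {base} and the "touching" relation
    (touch : ({v : V // v ≠ base} ⊕ Et) → ({v : V // v ≠ base} ⊕ Et) → Prop)
    (htouch : ∀ p q, touch p q ↔
      ((∃ (v : {v : V // v ≠ base}) (e : Et), p = Sum.inl v ∧ q = Sum.inr e ∧
          (v : V) ∈ ends e) ∨
       (∃ (v : {v : V // v ≠ base}) (e : Et), p = Sum.inr e ∧ q = Sum.inl v ∧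
          (v : V) ∈ ends e))) :
    IsEmpty ({v : V // v ≠ base} ⊕ Et) ∨
      ∃ p q : ({v : V // v ≠ base} ⊕ Et), ¬ Relation.ReflTransGen touch p q := by
  classical
  by_contra hcon
  push_neg at hcon
  obtain ⟨hne, hall⟩ := hcon
  have hloop : ∀ p : ({v : V // v ≠ base} ⊕ Et), ¬ touch p p := by
    intro p hp
    rcases (htouch p p).mp hp with ⟨v, e, h1, h2, _⟩ | ⟨v, e, h1, h2, _⟩ <;>
      · rw [h1] at h2; exact nomatch h2
  let G : SimpleGraph ({v : V // v ≠ base} ⊕ Et) :=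
    { Adj := fun p q => touch p q ∨ touch q p
      symm := ⟨fun p q h => h.symm⟩
      loopless := ⟨fun p h => by rcases h with h | h <;> exact hloop p h⟩ }
  have hpre : G.Preconnected := by
    intro p q
    rw [SimpleGraph.reachable_iff_reflTransGen]
    exact Relation.ReflTransGen.mono (fun a b h => Or.inl h) p q (hall p q)
  obtain ⟨root⟩ := hne
  -- parent step towards the root
  have key : ∀ p : ({v : V // v ≠ base} ⊕ Et), p ≠ root →
      ∃ (q : ({v : V // v ≠ base} ⊕ Et)) (v : {v : V // v ≠ base}) (e : Et),
      G.dist q root < G.dist p root ∧ (v : V) ∈ ends e ∧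
      ((p = Sum.inl v ∧ q = Sum.inr e) ∨ (p = Sum.inr e ∧ q = Sum.inl v)) := by
    intro p hp
    have hr : G.Reachable p root := hpre p root
    have hd : 0 < G.dist p root := hr.pos_dist_of_ne hp
    obtain ⟨w, hw⟩ := hr.exists_walk_length_eq_dist
    cases w with
    | nil => exact absurd rfl hp
    | @cons _ q _ h w' =>
      have hlen : w'.length + 1 = G.dist p root := by
        simpa [SimpleGraph.Walk.length_cons] using hw
      have hqr : G.dist q root ≤ w'.length := SimpleGraph.dist_le w'
      have hlt : G.dist q root < G.dist p root := by omega
      have hor : (∃ (v : {v : V // v ≠ base}) (e : Et),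
          ((p = Sum.inl v ∧ q = Sum.inr e) ∨ (p = Sum.inr e ∧ q = Sum.inl v)) ∧
          (v : V) ∈ ends e) := by
        rcases h with h | h
        · rcases (htouch p q).mp h with ⟨v, e, h1, h2, h3⟩ | ⟨v, e, h1, h2, h3⟩
          · exact ⟨v, e, Or.inl ⟨h1, h2⟩, h3⟩
          · exact ⟨v, e, Or.inr ⟨h1, h2⟩, h3⟩
        · rcases (htouch q p).mp h with ⟨v, e, h1, h2, h3⟩ | ⟨v, e, h1, h2, h3⟩
          · exact ⟨v, e, Or.inr ⟨h2, h1⟩, h3⟩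
          · exact ⟨v, e, Or.inl ⟨h2, h1⟩, h3⟩
      obtain ⟨v, e, hve, hmem⟩ := hor
      exact ⟨q, v, e, hlt, hmem, hve⟩
  have key' : ∀ p : {p : ({v : V // v ≠ base} ⊕ Et) // p ≠ root},
      ∃ (q : ({v : V // v ≠ base} ⊕ Et)) (v : {v : V // v ≠ base}) (e : Et),
      G.dist q root < G.dist (p : ({v : V // v ≠ base} ⊕ Et)) root ∧ (v : V) ∈ ends e ∧
      (((p : ({v : V // v ≠ base} ⊕ Et)) = Sum.inl v ∧ q = Sum.inr e) ∨
        ((p : ({v : V // v ≠ base} ⊕ Et)) = Sum.inr e ∧ q = Sum.inl v)) :=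
    fun p => key p p.2
  choose q v e hlt hmem hor using key'
  -- the injection into incidences
  let f : {p : ({v : V // v ≠ base} ⊕ Et) // p ≠ root} →
      {x : {v : V // v ≠ base} × Et // (x.1 : V) ∈ ends x.2} :=
    fun p => ⟨(v p, e p), hmem p⟩
  have hinj : Function.Injective f := by
    intro p p' hpp
    have hv : v p = v p' := congrArg (fun x => x.1.1) hpp
    have he : e p = e p' := congrArg (fun x => x.1.2) hpp
    by_contra hne'
    rcases hor p with ⟨hp1, hp2⟩ | ⟨hp1, hp2⟩ <;> rcases hor p' with ⟨hq1, hq2⟩ | ⟨hq1, hq2⟩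
    · exact hne' (Subtype.ext (by rw [hp1, hq1, hv]))
    · -- p = inl (v p), p' = inr (e p')
      have h1 : q p = (p' : ({v : V // v ≠ base} ⊕ Et)) := by rw [hp2, hq1, he]
      have h2 : q p' = (p : ({v : V // v ≠ base} ⊕ Et)) := by rw [hq2, hp1, hv]
      have l1 := hlt p
      have l2 := hlt p'
      rw [h1] at l1; rw [h2] at l2; omega
    · -- p = inr (e p), p' = inl (v p')
      have h1 : q p = (p' : ({v : V // v ≠ base} ⊕ Et)) := by rw [hp2, hq1, hv]
      have h2 : q p' = (p : ({v : V // v ≠ base} ⊕ Et)) := by rw [hq2, hp1, he]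
      have l1 := hlt p
      have l2 := hlt p'
      rw [h1] at l1; rw [h2] at l2; omega
    · exact hne' (Subtype.ext (by rw [hp1, hq1, he]))
  have hcard1 : Fintype.card {p : ({v : V // v ≠ base} ⊕ Et) // p ≠ root} ≤
      Fintype.card {x : {v : V // v ≠ base} × Et // (x.1 : V) ∈ ends x.2} :=
    Fintype.card_le_of_injective f hinj
  have hcardP : Fintype.card ({v : V // v ≠ base} ⊕ Et) =
      Fintype.card {v : V // v ≠ base} + Fintype.card Et := Fintype.card_sum
  have hcardC : Fintype.card {p : ({v : V // v ≠ base} ⊕ Et) // p ≠ root} =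
      Fintype.card ({v : V // v ≠ base} ⊕ Et) - 1 := by
    have h1 : Fintype.card {p : ({v : V // v ≠ base} ⊕ Et) // p = root} = 1 :=
      Fintype.card_subtype_eq root
    have h2 := Fintype.card_subtype_compl (fun p : ({v : V // v ≠ base} ⊕ Et) => p = root)
    rw [h1] at h2
    exact h2
  have hPpos : 1 ≤ Fintype.card ({v : V // v ≠ base} ⊕ Et) :=
    @Fintype.card_pos _ _ ⟨root⟩
  -- count the incidences
  have hpairs : Fintype.card {x : {v : V // v ≠ base} × Et // (x.1 : V) ∈ ends x.2} ≤
      ∑ a : {v : V // v ≠ base}, ∑ ed : Et, (ends ed).count (a : V) := by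
    rw [Fintype.card_subtype, Finset.card_filter, Fintype.sum_prod_type]
    apply Finset.sum_le_sum
    intro a _
    apply Finset.sum_le_sum
    intro ed _
    by_cases hmem' : (a : V) ∈ ends ed
    · simp only [hmem', if_true]
      exact Multiset.one_le_count_iff_mem.mpr hmem'
    · simp [hmem']
  have hsubsum : ∑ a : {v : V // v ≠ base}, ∑ ed : Et, (ends ed).count (a : V) =
      ∑ w ∈ Finset.univ.filter (fun v : V => v ≠ base), ∑ ed : Et, (ends ed).count w :=
    (Finset.sum_subtype (p := fun v : V => v ≠ base)
      (Finset.univ.filter (fun v : V => v ≠ base))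
      (fun x => by simp) (fun w => ∑ ed : Et, (ends ed).count w)).symm
  have hmcard : Fintype.card {v : V // v ≠ base} =
      (Finset.univ.filter (fun v : V => v ≠ base)).card := Fintype.card_subtype _
  have hS : ∑ w ∈ Finset.univ.filter (fun v : V => v ≠ base), ∑ ed : Et, (ends ed).count w
      = deg + 2 * (Finset.univ.filter (fun v : V => v ≠ base)).card := by
    have hstep : ∑ w ∈ Finset.univ.filter (fun v : V => v ≠ base),
        (((∑ ed : Et, (ends ed).count w) - 2) + 2)
        = ∑ w ∈ Finset.univ.filter (fun v : V => v ≠ base), ∑ ed : Et, (ends ed).count w := by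
      apply Finset.sum_congr rfl
      intro w hw
      have := hval w (Finset.mem_filter.mp hw).2
      omega
    rw [← hstep, Finset.sum_add_distrib, Finset.sum_const, hdeg, smul_eq_mul]
    ring
  have hcardV : Fintype.card V =
      (Finset.univ.filter (fun v : V => v ≠ base)).card + 1 := by
    have hsplit := Finset.card_filter_add_card_filter_not
      (s := (Finset.univ : Finset V)) (p := fun v : V => v ≠ base)
    have hone : (Finset.univ.filter (fun v : V => ¬ v ≠ base)).card = 1 := by
      have heq : (Finset.univ.filter (fun v : V => ¬ v ≠ base)) = {base} := by
        ext x; simp [em]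
      rw [heq, Finset.card_singleton]
    have h3 : (Finset.univ : Finset V).card = Fintype.card V := Finset.card_univ
    omega
  have hfinal := le_trans hcard1 hpairs
  rw [hcardC, hcardP, hsubsum, hS, hmcard] at hfinal
  rw [hcardP, hmcard] at hPpos
  rw [hcardV] at hn
  omega
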